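/- Let S be a finite monoid and A a finite set. For every F ⊆ SOp(A) and Q ⊆ SRel(A), one has SPol Q = SPol [Q]_S and SInv F = SInv ⟨F⟩_S, i.e., the Galois operators do not distinguish a set from the S-relational clone, respectively the S-preclone, it generates. -/

import Mathlib

namespace SPreclone

/-- An `S`-operation on `A`: an `(n+1)`-ary operation together with a signum
assigning an element of `S` to each argument. -/
structure SOp (S A : Type*) where
  n : ℕ
  fn : (Fin (n + 1) → A) → A
  sgn : Fin (n + 1) → S

/-- An `S`-relation on `A`: a family of `(m+1)`-ary relations indexed by `S`. -/
structure SRel (S A : Type*) where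
  m : ℕ
  rel : S → Set (Fin (m + 1) → A)

section

variable {S A : Type*} [Monoid S]

/-- `f` S-preserves `ρ`. -/
def SPreserves (f : SOp S A) (ρ : SRel S A) : Prop :=
  ∀ s : S, ∀ r : Fin (f.n + 1) → (Fin (ρ.m + 1) → A),
    (∀ i, r i ∈ ρ.rel (f.sgn i * s)) →
    (fun j => f.fn fun i => r i j) ∈ ρ.rel s

/-- `S`-polymorphisms of a set of `S`-relations. -/
def SPol (Q : Set (SRel S A)) : Set (SOp S A) := { f | ∀ ρ ∈ Q, SPreserves f ρ }

/-- Invariant `S`-relations of a set of `S`-operations. -/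
def SInv (F : Set (SOp S A)) : Set (SRel S A) := { ρ | ∀ f ∈ F, SPreserves f ρ }

/-- The identity operation, with signum `(e)`. -/
def idOp (S A : Type*) [Monoid S] : SOp S A := ⟨0, fun x => x 0, fun _ => 1⟩

/-- Cyclic shift `ζ` of the arguments (and the signa). -/
def cycOp (f : SOp S A) : SOp S A :=
  ⟨f.n, fun x => f.fn fun j => x (j + 1), fun i => f.sgn (i - 1)⟩

/-- Transposition `τ` of the first two arguments (and their signa). -/
def swapOp (f : SOp S A) : SOp S A :=
  ⟨f.n, fun x => f.fn fun j => x (Equiv.swap 0 1 j), fun i => f.sgn (Equiv.swap 0 1 i)⟩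

/-- `∇^s`: adding a fictitious first argument with signum `s`. -/
def nablaOp (s : S) (f : SOp S A) : SOp S A :=
  ⟨f.n + 1, fun x => f.fn fun j => x j.succ, Fin.cases (motive := fun _ => S) s f.sgn⟩

open Classical in
/-- `Δ`: identification of the first two arguments when they have the same signum
(otherwise, and for unary operations, `Δ f := f`). -/
noncomputable def deltaOp (f : SOp S A) : SOp S A :=
  match f with
  | ⟨0, fn, sgn⟩ => ⟨0, fn, sgn⟩
  | ⟨m + 1, fn, sgn⟩ =>
    if sgn 0 = sgn 1 then
      ⟨m, fun x => fn fun j => x ⟨j.val - 1, by have := j.isLt; omega⟩,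
        fun i => sgn i.succ⟩
    else ⟨m + 1, fn, sgn⟩

/-- Composition `(f ∘ g)(x₁,…,x_m,x_{m+1},…,x_{m+n-1}) = f(g(x₁,…,x_m),x_{m+1},…,x_{m+n-1})`,
with signum `(s'₁s₁, …, s'_m s₁, s₂, …, s_n)`. -/
def compOp (f g : SOp S A) : SOp S A :=
  ⟨g.n + f.n,
   fun x => f.fn fun k => Fin.cases (motive := fun _ => A)
     (g.fn fun i => x ⟨i.val, by have := i.isLt; omega⟩)
     (fun j => x ⟨g.n + 1 + j.val, by have := j.isLt; omega⟩) k,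
   fun i =>
     if h : i.val < g.n + 1 then g.sgn ⟨i.val, h⟩ * f.sgn 0
     else f.sgn ⟨i.val - g.n, by have := i.isLt; omega⟩⟩

/-- A set of `S`-operations is an `S`-preclone if it contains the identity and is closed
under `ζ`, `τ`, `∇^s`, `Δ` and composition. -/
def IsSPreclone (F : Set (SOp S A)) : Prop :=
  idOp S A ∈ F ∧
  (∀ f ∈ F, cycOp f ∈ F) ∧
  (∀ f ∈ F, swapOp f ∈ F) ∧
  (∀ (s : S), ∀ f ∈ F, nablaOp s f ∈ F) ∧
  (∀ f ∈ F, deltaOp f ∈ F) ∧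
  (∀ f ∈ F, ∀ g ∈ F, compOp f g ∈ F)

/-- The `S`-preclone generated by `F` (the least `S`-preclone containing `F`). -/
def SSg (F : Set (SOp S A)) : Set (SOp S A) := ⋂₀ { G | IsSPreclone G ∧ F ⊆ G }

/-- `δ^S := (Δ_A)_{s ∈ S}`. -/
def deltaS (S A : Type*) : SRel S A := ⟨1, fun _ => { a | a 0 = a 1 }⟩

/-- Componentwise cyclic shift of coordinates. -/
def cycRel (ρ : SRel S A) : SRel S A :=
  ⟨ρ.m, fun s => { b | (fun i => b (i - 1)) ∈ ρ.rel s }⟩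

/-- Componentwise transposition of the first two coordinates. -/
def swapRel (ρ : SRel S A) : SRel S A :=
  ⟨ρ.m, fun s => { b | (fun i => b (Equiv.swap 0 1 i)) ∈ ρ.rel s }⟩

/-- Componentwise deletion of the first coordinate (identity on unary relations). -/
def prRel (ρ : SRel S A) : SRel S A :=
  match ρ with
  | ⟨0, r⟩ => ⟨0, r⟩
  | ⟨m + 1, r⟩ => ⟨m, fun s => { b | ∃ a ∈ r s, b = fun j => a j.succ }⟩

/-- Componentwise Cartesian product. -/
def prodRel (ρ ρ' : SRel S A) : SRel S A :=
  ⟨ρ.m + ρ'.m + 1, fun s =>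
    { c | (fun i : Fin (ρ.m + 1) => c ⟨i.val, by have := i.isLt; omega⟩) ∈ ρ.rel s ∧
          (fun i : Fin (ρ'.m + 1) => c ⟨ρ.m + 1 + i.val, by have := i.isLt; omega⟩) ∈ ρ'.rel s }⟩

/-- Componentwise intersection; empty if the arities differ. -/
def interRel (ρ ρ' : SRel S A) : SRel S A :=
  if h : ρ.m = ρ'.m then
    ⟨ρ.m, fun s => { a | a ∈ ρ.rel s ∧
        (fun i : Fin (ρ'.m + 1) => a (Fin.cast (by omega) i)) ∈ ρ'.rel s }⟩
  else ⟨ρ.m, fun _ => ∅⟩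

/-- Index translation `μ_v(ρ) := (ρ_{sv})_{s ∈ S}`. -/
def muRel (v : S) (ρ : SRel S A) : SRel S A := ⟨ρ.m, fun s => ρ.rel (s * v)⟩

/-- `v`-self-intersection `(⊓^v ρ)_s := ⋂ { ρ_{s'} ∣ s'v = s }`
(an empty intersection being the full relation). -/
def selfInterRel (v : S) (ρ : SRel S A) : SRel S A :=
  ⟨ρ.m, fun s => { a | ∀ s' : S, s' * v = s → a ∈ ρ.rel s' }⟩

/-- A set of `S`-relations is an `S`-relational clone if it contains `δ^S` and is
closed under `ζ`, `τ`, `pr`, `×`, `∧`, `μ_v` and `⊓^v`. -/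
def IsSRelClone (Q : Set (SRel S A)) : Prop :=
  deltaS S A ∈ Q ∧
  (∀ ρ ∈ Q, cycRel ρ ∈ Q) ∧
  (∀ ρ ∈ Q, swapRel ρ ∈ Q) ∧
  (∀ ρ ∈ Q, prRel ρ ∈ Q) ∧
  (∀ ρ ∈ Q, ∀ ρ' ∈ Q, prodRel ρ ρ' ∈ Q) ∧
  (∀ ρ ∈ Q, ∀ ρ' ∈ Q, interRel ρ ρ' ∈ Q) ∧
  (∀ (v : S), ∀ ρ ∈ Q, muRel v ρ ∈ Q) ∧
  (∀ (v : S), ∀ ρ ∈ Q, selfInterRel v ρ ∈ Q)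

/-- The `S`-relational clone generated by `Q`. -/
def SRg (Q : Set (SRel S A)) : Set (SRel S A) := ⋂₀ { R | IsSRelClone R ∧ Q ⊆ R }

/-- `Γ_F(ρ)`: the least `S`-relation of the same arity containing `ρ` and invariant
for `F` (defined as the intersection of all such). -/
def Gamma (F : Set (SOp S A)) (ρ : SRel S A) : SRel S A :=
  ⟨ρ.m, fun s => ⋂ g ∈ { g : S → Set (Fin (ρ.m + 1) → A) |
      (⟨ρ.m, g⟩ : SRel S A) ∈ SInv F ∧ ∀ t, ρ.rel t ⊆ g t }, g s⟩

/-- Trivial `S`-operations (trivial projections): projections whose essential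
argument has signum `e`. -/
def SJ (S A : Type*) [Monoid S] : Set (SOp S A) :=
  { f | ∃ i : Fin (f.n + 1), f.sgn i = 1 ∧ ∀ x, f.fn x = x i }

/-- A diagonal relation: empty, or defined by an equivalence relation on the coordinates. -/
def IsDiagonal {A : Type*} {m : ℕ} (σ : Set (Fin m → A)) : Prop :=
  σ = ∅ ∨ ∃ ε : Fin m → Fin m → Prop, Equivalence ε ∧ σ = { a | ∀ i j, ε i j → a i = a j }

/-- `S`-diagonal `S`-relations. -/
def SD (S A : Type*) [Monoid S] : Set (SRel S A) :=
  { ρ | (∀ s, IsDiagonal (ρ.rel s)) ∧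
      ∀ s t : S, ({ x | ∃ u, x = u * s } : Set S) ⊆ { x | ∃ u, x = u * t } →
        ρ.rel s ⊆ ρ.rel t }

/-- Projection of an `S`-relation to the rows `z 0, …, z t` (componentwise). -/
def prMulti {t : ℕ} (ρ : SRel S A) (z : Fin (t + 1) → Fin (ρ.m + 1)) : SRel S A :=
  ⟨t, fun s => { b | ∃ a ∈ ρ.rel s, b = fun j => a (z j) }⟩

/-- One step of the inductive construction of `Γ_F(ρ)`:
`R s ∪ { f(r₁,…,r_n) ∣ f ∈ F, r_j ∈ R (sgn(f)_j * s) }`. -/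
def gammaStep (F : Set (SOp S A)) {m : ℕ}
    (R : S → Set (Fin (m + 1) → A)) : S → Set (Fin (m + 1) → A) :=
  fun s => R s ∪ { b | ∃ f ∈ F, ∃ r : Fin (f.n + 1) → (Fin (m + 1) → A),
    (∀ j, r j ∈ R (f.sgn j * s)) ∧ b = fun z => f.fn fun j => r j z }

/-- `χ` is (a presentation of) the `S`-relation `χ^λ`: its rows are enumerated by
*all* tuples of `A^n` via `e`, and its `s`-component consists exactly of the columns
`κ_i` with `λ i = s`. -/
def IsChi {n : ℕ} (lam : Fin n → S) (χ : SRel S A) : Prop :=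
  ∃ e : Fin (χ.m + 1) ≃ (Fin n → A),
    ∀ s, χ.rel s = { c | ∃ i, lam i = s ∧ c = fun z => e z i }

/-- `γ_Q(ρ)`: the least `S`-relation of the same arity containing `ρ` and belonging
to the `S`-relational clone generated by `Q` (defined as the intersection of all such). -/
def gammaQ (Q : Set (SRel S A)) (ρ : SRel S A) : SRel S A :=
  ⟨ρ.m, fun s => ⋂ g ∈ { g : S → Set (Fin (ρ.m + 1) → A) |
      (⟨ρ.m, g⟩ : SRel S A) ∈ SRg Q ∧ ∀ t, ρ.rel t ⊆ g t }, g s⟩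

/-- `π`-dual of an `S`-operation. -/
def opPi (π : Equiv.Perm A) (f : SOp S A) : SOp S A :=
  ⟨f.n, fun x => π (f.fn fun i => π.symm (x i)), f.sgn⟩

/-- `π`-dual of an `S`-relation. -/
def relPi (π : Equiv.Perm A) (ρ : SRel S A) : SRel S A :=
  ⟨ρ.m, fun s => { b | ∃ a ∈ ρ.rel s, b = fun i => π (a i) }⟩

/-- `h`-dual of an `S`-operation (only the signum changes). -/
def opH (h : S ≃* S) (f : SOp S A) : SOp S A :=
  ⟨f.n, f.fn, fun i => h (f.sgn i)⟩

/-- `h`-dual of an `S`-relation: `ρ^h := (ρ_{h⁻¹(s)})_{s ∈ S}`. -/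
def relH (h : S ≃* S) (ρ : SRel S A) : SRel S A :=
  ⟨ρ.m, fun s => ρ.rel (h.symm s)⟩

end

/-- An ordinary (unsigned) operation on `A`. -/
structure UOp (A : Type*) where
  n : ℕ
  fn : (Fin (n + 1) → A) → A

/-- An ordinary (unsigned) relation on `A`. -/
structure URel (A : Type*) where
  m : ℕ
  rel : Set (Fin (m + 1) → A)

/-- Ordinary preservation of a relation by an operation. -/
def UPreserves {A : Type*} (f : UOp A) (σ : URel A) : Prop :=
  ∀ r : Fin (f.n + 1) → (Fin (σ.m + 1) → A),
    (∀ i, r i ∈ σ.rel) → (fun j => f.fn fun i => r i j) ∈ σ.rel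

/-- Polymorphisms of a set of ordinary relations. -/
def UPol {A : Type*} (R : Set (URel A)) : Set (UOp A) := { f | ∀ σ ∈ R, UPreserves f σ }

/-- A clone: contains all projections and is closed under composition. -/
def IsClone {A : Type*} (C : Set (UOp A)) : Prop :=
  (∀ (n : ℕ) (i : Fin (n + 1)), (⟨n, fun x => x i⟩ : UOp A) ∈ C) ∧
  (∀ f ∈ C, ∀ (m : ℕ) (g : Fin (f.n + 1) → ((Fin (m + 1) → A) → A)),
    (∀ i, (⟨m, g i⟩ : UOp A) ∈ C) → (⟨m, fun x => f.fn fun i => g i x⟩ : UOp A) ∈ C)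

/-- The clone generated by a set of operations. -/
def CloneGen {A : Type*} (G : Set (UOp A)) : Set (UOp A) := ⋂₀ { C | IsClone C ∧ G ⊆ C }

section Aux
variable {S A : Type*} [Monoid S]

lemma inv_clone (f : SOp S A) : IsSRelClone {ρ : SRel S A | SPreserves f ρ} := by
  refine ⟨?_, ?_, ?_, ?_, ?_, ?_, ?_, ?_⟩
  · -- deltaS
    intro s r hr
    have h : (fun i => r i (0 : Fin 2)) = (fun i => r i 1) := funext fun i => hr i
    show f.fn (fun i => r i 0) = f.fn (fun i => r i 1)
    exact congrArg f.fn h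
  · -- cyc
    rintro ⟨m, R⟩ hρ
    show SPreserves f _
    dsimp only [SPreserves, cycRel]
    intro s r hr
    exact hρ s (fun i z => r i (z - 1)) (fun i => hr i)
  · -- swap
    rintro ⟨m, R⟩ hρ
    show SPreserves f _
    dsimp only [SPreserves, swapRel]
    intro s r hr
    exact hρ s (fun i z => r i (Equiv.swap 0 1 z)) (fun i => hr i)
  · -- pr
    rintro ⟨m, R⟩ hρ
    cases m with
    | zero => exact hρ
    | succ m =>
      show SPreserves f _
      dsimp only [SPreserves, prRel]
      intro s r hr
      choose a ha hb using hr
      refine ⟨fun z => f.fn fun i => a i z, hρ s a ha, ?_⟩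
      funext j
      show f.fn _ = f.fn _
      congr 1
      funext i
      rw [hb i]
  · -- prod
    rintro ⟨m, R⟩ hρ ⟨m', R'⟩ hρ'
    show SPreserves f _
    dsimp only [SPreserves, prodRel]
    intro s r hr
    refine ⟨?_, ?_⟩
    · exact hρ s (fun i (z : Fin (m + 1)) => r i ⟨z.val, by have := z.isLt; omega⟩)
        (fun i => (hr i).1)
    · exact hρ' s (fun i (z : Fin (m' + 1)) => r i ⟨m + 1 + z.val, by have := z.isLt; omega⟩)
        (fun i => (hr i).2)
  · -- inter
    rintro ⟨m, R⟩ hρ ⟨m', R'⟩ hρ'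
    show SPreserves f (interRel ⟨m, R⟩ ⟨m', R'⟩)
    by_cases h : m = m'
    · subst h
      unfold interRel
      rw [dif_pos rfl]
      intro s r hr
      exact ⟨hρ s r (fun i => (hr i).1), hρ' s r (fun i => (hr i).2)⟩
    · unfold interRel
      rw [dif_neg h]
      intro s r hr
      exact absurd (hr 0) (Set.notMem_empty _)
  · -- mu
    rintro v ⟨m, R⟩ hρ
    show SPreserves f _
    dsimp only [SPreserves, muRel]
    intro s r hr
    exact hρ (s * v) r (fun i => by have := hr i; rwa [mul_assoc] at this)
  · -- selfInter
    rintro v ⟨m, R⟩ hρ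
    show SPreserves f _
    dsimp only [SPreserves, selfInterRel]
    intro s r hr s' hs'
    exact hρ s' r (fun i => hr i (f.sgn i * s') (by rw [mul_assoc, hs']))


open Classical in
lemma pol_preclone (ρ : SRel S A) : IsSPreclone {f : SOp S A | SPreserves f ρ} := by
  refine ⟨?_, ?_, ?_, ?_, ?_, ?_⟩
  · -- id
    show SPreserves (idOp S A) ρ
    dsimp only [SPreserves, idOp]
    intro s r hr
    have := hr 0
    rw [one_mul] at this
    exact this
  · -- cyc
    rintro ⟨n, fn, sgn⟩ hf
    show SPreserves _ ρ
    dsimp only [SPreserves, cycOp]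
    intro s r hr
    refine hf s (fun j => r (j + 1)) (fun j => ?_)
    have := hr (j + 1)
    rwa [add_sub_cancel_right] at this
  · -- swap
    rintro ⟨n, fn, sgn⟩ hf
    show SPreserves _ ρ
    dsimp only [SPreserves, swapOp]
    intro s r hr
    refine hf s (fun j => r (Equiv.swap 0 1 j)) (fun j => ?_)
    have := hr (Equiv.swap 0 1 j)
    rwa [Equiv.swap_apply_self] at this
  · -- nabla
    rintro s0 ⟨n, fn, sgn⟩ hf
    show SPreserves _ ρ
    dsimp only [SPreserves, nablaOp]
    intro s r hr
    refine hf s (fun j => r j.succ) (fun j => ?_)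
    have := hr j.succ
    rwa [Fin.cases_succ] at this
  · -- delta
    rintro ⟨n, fn, sgn⟩ hf
    cases n with
    | zero => exact hf
    | succ m =>
      show SPreserves (deltaOp ⟨m + 1, fn, sgn⟩) ρ
      have hred : deltaOp (⟨m + 1, fn, sgn⟩ : SOp S A) =
          if sgn 0 = sgn 1 then
            (⟨m, fun x => fn fun j => x ⟨j.val - 1, by have := j.isLt; omega⟩,
              fun i => sgn i.succ⟩ : SOp S A)
          else (⟨m + 1, fn, sgn⟩ : SOp S A) := rfl
      by_cases h : sgn 0 = sgn 1
      · rw [hred, if_pos h]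
        dsimp only [SPreserves]
        intro s r hr
        have hr2 : ∀ j : Fin (m + 1 + 1),
            r ⟨j.val - 1, by have := j.isLt; omega⟩ ∈ ρ.rel (sgn j * s) := by
          intro j
          have hs : sgn j =
              sgn (Fin.succ (⟨j.val - 1, by have := j.isLt; omega⟩ : Fin (m + 1))) := by
            rcases Nat.eq_zero_or_pos j.val with hj | hj
            · have e1 : j = (0 : Fin (m + 1 + 1)) := Fin.ext (by simpa using hj)
              have e2 : Fin.succ (⟨j.val - 1, by have := j.isLt; omega⟩ : Fin (m + 1)) =
                  (1 : Fin (m + 1 + 1)) := Fin.ext (by simp [hj])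
              rw [e2, e1]; exact h
            · congr 1
              apply Fin.ext
              simp only [Fin.val_succ]
              omega
          rw [hs]
          exact hr ⟨j.val - 1, by have := j.isLt; omega⟩
        exact hf s (fun (j : Fin (m + 1 + 1)) =>
          r ⟨j.val - 1, by have := j.isLt; omega⟩) hr2
      · rw [hred, if_neg h]
        exact hf
  · -- comp
    intro f hf g hg
    show SPreserves (compOp f g) ρ
    dsimp only [SPreserves, compOp]
    intro s r hr
    have hq1 : (fun z => g.fn fun (i : Fin (g.n + 1)) =>
        r ⟨i.val, by have := i.isLt; omega⟩ z) ∈ ρ.rel (f.sgn 0 * s) := by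
      refine hg (f.sgn 0 * s)
        (fun (i : Fin (g.n + 1)) => r ⟨i.val, by have := i.isLt; omega⟩) (fun i => ?_)
      have := hr ⟨i.val, by have := i.isLt; omega⟩
      rw [dif_pos (show (⟨i.val, by have := i.isLt; omega⟩ : Fin (g.n + f.n + 1)).val < g.n + 1
        from i.isLt)] at this
      rwa [mul_assoc] at this
    have hrf : ∀ k : Fin (f.n + 1),
        (Fin.cases (motive := fun _ => Fin (ρ.m + 1) → A)
          (fun z => g.fn fun (i : Fin (g.n + 1)) => r ⟨i.val, by have := i.isLt; omega⟩ z)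
          (fun j => r ⟨g.n + 1 + j.val, by have := j.isLt; omega⟩) k) ∈ ρ.rel (f.sgn k * s) := by
      intro k
      induction k using Fin.cases with
      | zero => rw [Fin.cases_zero]; exact hq1
      | succ j =>
        rw [Fin.cases_succ]
        have := hr ⟨g.n + 1 + j.val, by have := j.isLt; omega⟩
        rw [dif_neg (by simp; omega)] at this
        have hidx : (⟨(⟨g.n + 1 + j.val, by have := j.isLt; omega⟩ : Fin (g.n + f.n + 1)).val - g.n,
            by have := j.isLt; omega⟩ : Fin (f.n + 1)) = j.succ := by
          apply Fin.ext; simp [Fin.val_succ]; omega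
        rwa [hidx] at this
    have main := hf s _ hrf
    have heq : (fun z => f.fn fun k => (Fin.cases (motive := fun _ => Fin (ρ.m + 1) → A)
          (fun z => g.fn fun (i : Fin (g.n + 1)) => r ⟨i.val, by have := i.isLt; omega⟩ z)
          (fun j => r ⟨g.n + 1 + j.val, by have := j.isLt; omega⟩) k) z)
        = fun z => f.fn fun k => Fin.cases (motive := fun _ => A)
          (g.fn fun (i : Fin (g.n + 1)) => r ⟨i.val, by have := i.isLt; omega⟩ z)
          (fun j => r ⟨g.n + 1 + j.val, by have := j.isLt; omega⟩ z) k := by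
      funext z
      congr 1
      funext k
      induction k using Fin.cases with
      | zero => rw [Fin.cases_zero, Fin.cases_zero]
      | succ j => rw [Fin.cases_succ, Fin.cases_succ]
    rw [heq] at main
    exact main

end Aux

/-- The Galois operators do not distinguish a set from the `S`-relational clone,
respectively the `S`-preclone, it generates: `SPol Q = SPol [Q]_S` and
`SInv F = SInv ⟨F⟩_S`. -/
theorem SPol_SRg_and_SInv_SSg {S A : Type*} [Monoid S] [Fintype S] [Fintype A]
    (F : Set (SOp S A)) (Q : Set (SRel S A)) :
    SPol Q = SPol (SRg Q) ∧ SInv F = SInv (SSg F) := by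
  constructor
  · ext f
    constructor
    · intro hf ρ hρ
      exact Set.mem_sInter.1 hρ {ρ' | SPreserves f ρ'} ⟨inv_clone f, hf⟩
    · intro hf ρ hρ
      exact hf ρ (Set.mem_sInter.2 fun R hR => hR.2 hρ)
  · ext ρ
    constructor
    · intro hρ f hf
      exact Set.mem_sInter.1 hf {f' | SPreserves f' ρ} ⟨pol_preclone ρ, hρ⟩
    · intro hρ f hf
      exact hρ f (Set.mem_sInter.2 fun G hG => hG.2 hf)


end SPreclone
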